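/- arXiv:1504.00546 — 4 statements merged into one kernel-verified Lean document; each statement's English description precedes it below -/
import Mathlib

section
/- Let n, m, ℓ be positive integers and let x, a, b be real numbers with b < a < x. Define F_{(n,m,ℓ)}(x,a,b) = (1/((n−1)!(m−1)!(ℓ−1)!)) ∫_a^x (u−b)^{n−1} (u−a)^{m−1} (x−u)^{ℓ−1} du. Then F_{(n,m,ℓ)}(x,a,b) = Σ_{k=0}^{n−1} binom(m+k−1, k) · (1/((n−1−k)! (m+ℓ+k−1)!)) · (a−b)^{n−1−k} (x−a)^{m+ℓ+k−1}. -/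
open intervalIntegral

lemma fact_ne (j : ℕ) : (j.factorial : ℝ) ≠ 0 :=
  Nat.cast_ne_zero.mpr j.factorial_ne_zero

lemma beta_nat (a x : ℝ) : ∀ q p : ℕ,
    ∫ u in a..x, (u - a) ^ p * (x - u) ^ q =
      ((p.factorial * q.factorial : ℕ) : ℝ) / ((p + q + 1).factorial : ℝ) * (x - a) ^ (p + q + 1)
  | 0, p => by
      simp only [pow_zero, mul_one]
      rw [intervalIntegral.integral_comp_sub_right (fun u => u ^ p) a]
      simp [integral_pow, Nat.factorial_succ]
      push_cast
      field_simp
  | (q+1), p => by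
      have hu : ∀ t ∈ Set.uIcc a x, HasDerivAt (fun t => (x - t) ^ (q+1))
          (-(((q:ℝ)+1) * (x - t) ^ q)) t := by
        intro t _
        have h := ((hasDerivAt_id t).const_sub x).pow (q+1)
        simpa [mul_comm, mul_assoc, mul_left_comm, Pi.pow_def] using h
      have hv : ∀ t ∈ Set.uIcc a x, HasDerivAt (fun t => (t - a) ^ (p+1))
          (((p:ℝ)+1) * (t - a) ^ p) t := by
        intro t _
        have h := ((hasDerivAt_id t).sub_const a).pow (p+1)
        simpa [Pi.pow_def] using h
      have h1 : IntervalIntegrable (fun t => -(((q:ℝ)+1) * (x - t) ^ q)) MeasureTheory.volume a x := by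
        apply Continuous.intervalIntegrable; fun_prop
      have h2 : IntervalIntegrable (fun t => ((p:ℝ)+1) * (t - a) ^ p) MeasureTheory.volume a x := by
        apply Continuous.intervalIntegrable; fun_prop
      have parts := intervalIntegral.integral_mul_deriv_eq_deriv_mul hu hv h1 h2
      have L : ∫ t in a..x, (x - t) ^ (q+1) * (((p:ℝ)+1) * (t - a) ^ p)
          = ((p:ℝ)+1) * ∫ t in a..x, (t - a) ^ p * (x - t) ^ (q+1) := by
        rw [← intervalIntegral.integral_const_mul]
        apply intervalIntegral.integral_congr
        intro t _; ring
      have R : ∫ t in a..x, (-(((q:ℝ)+1) * (x - t) ^ q)) * (t - a) ^ (p+1)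
          = -(((q:ℝ)+1) * ∫ t in a..x, (t - a) ^ (p+1) * (x - t) ^ q) := by
        rw [← intervalIntegral.integral_const_mul, ← intervalIntegral.integral_neg]
        apply intervalIntegral.integral_congr
        intro t _; ring
      rw [L, R] at parts
      have IH := beta_nat a x q (p+1)
      rw [IH] at parts
      simp only [sub_self, zero_pow (Nat.succ_ne_zero q), zero_mul, sub_zero, zero_sub,
        neg_neg] at parts
      have hp1 : ((p:ℝ)+1) ≠ 0 := by positivity
      apply mul_left_cancel₀ hp1
      rw [parts]
      have e1 : p + 1 + q + 1 = p + (q + 1) + 1 := by omega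
      rw [e1]
      push_cast [Nat.factorial_succ]
      field_simp
      ring

lemma choose_cast_eq (M k : ℕ) :
    ((M + k).choose k : ℝ) = ((M + k).factorial : ℝ) / (k.factorial * M.factorial) := by
  have h := Nat.add_choose_mul_factorial_mul_factorial M k
  field_simp [fact_ne]
  rw [← Nat.cast_mul, ← Nat.cast_mul, mul_right_comm]
  exact_mod_cast congrArg (Nat.cast : ℕ → ℝ) h

/-- the iterated-integral lemma for products of truncated powers. -/
theorem iterated_integral_truncated_powers
    (n m ℓ : ℕ) (hn : 0 < n) (hm : 0 < m) (hℓ : 0 < ℓ)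
    (x a b : ℝ) (hba : b < a) (hax : a < x) :
    (1 / ((n - 1).factorial * (m - 1).factorial * (ℓ - 1).factorial) : ℝ) *
        ∫ u in a..x, (u - b) ^ (n - 1) * (u - a) ^ (m - 1) * (x - u) ^ (ℓ - 1) =
      ∑ k ∈ Finset.range n,
        ((m + k - 1).choose k : ℝ) *
          (1 / ((n - 1 - k).factorial * (m + ℓ + k - 1).factorial)) *
          (a - b) ^ (n - 1 - k) * (x - a) ^ (m + ℓ + k - 1) := by
  obtain ⟨N, rfl⟩ := Nat.exists_eq_succ_of_ne_zero hn.ne'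
  obtain ⟨M, rfl⟩ := Nat.exists_eq_succ_of_ne_zero hm.ne'
  obtain ⟨L, rfl⟩ := Nat.exists_eq_succ_of_ne_zero hℓ.ne'
  have e2 : ∀ k : ℕ, M + 1 + k - 1 = M + k := fun k => by omega
  have e3 : ∀ k : ℕ, M + 1 + (L + 1) + k - 1 = M + L + k + 1 := fun k => by omega
  simp only [Nat.succ_sub_one, e2, e3]
  have hint : (∫ u in a..x, (u - b) ^ N * (u - a) ^ M * (x - u) ^ L) =
      ∑ k ∈ Finset.range (N + 1),
        ((N.choose k : ℝ) * (a - b) ^ (N - k)) *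
          ((((M + k).factorial * L.factorial : ℕ) : ℝ) / ((M + k + L + 1).factorial : ℝ)
            * (x - a) ^ (M + k + L + 1)) := by
    rw [intervalIntegral.integral_congr (g := fun u =>
        ∑ k ∈ Finset.range (N + 1),
          ((N.choose k : ℝ) * (a - b) ^ (N - k)) * ((u - a) ^ (M + k) * (x - u) ^ L))]
    · rw [intervalIntegral.integral_finset_sum]
      · refine Finset.sum_congr rfl fun k _ => ?_
        rw [intervalIntegral.integral_const_mul, beta_nat a x L (M + k)]
      · intro k _
        apply Continuous.intervalIntegrable; fun_prop
    · intro u _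
      simp only []
      rw [show u - b = (u - a) + (a - b) by ring, add_pow, Finset.sum_mul, Finset.sum_mul]
      refine Finset.sum_congr rfl fun k _ => ?_
      rw [pow_add]
      push_cast
      ring
  rw [hint, Finset.mul_sum]
  refine Finset.sum_congr rfl fun k hk => ?_
  have hk' : k ≤ N := Nat.lt_succ_iff.mp (Finset.mem_range.mp hk)
  have e4 : M + k + L + 1 = M + L + k + 1 := by omega
  rw [e4]
  have c1 : (N.choose k : ℝ) = (N.factorial : ℝ) / (k.factorial * (N - k).factorial) := by
    have h := Nat.choose_mul_factorial_mul_factorial hk'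
    field_simp [fact_ne]
    exact_mod_cast congrArg (Nat.cast : ℕ → ℝ) h
  rw [c1, choose_cast_eq]
  push_cast
  field_simp [fact_ne]
end

section
/- Let X = {x¹, x², x³} ⊂ ℝ² be a 3-directional mesh with x³ = x¹ + x² = (1,0)ᵀ and x¹₂ > 0, and let n₁, n₂, n₃ be positive integers. Define C_𝐧(x | X) = ( x¹₂ · (n₁−1)!(n₂−1)!(n₃−1)! )⁻¹ ∫_{−∞}^{x₁} ( u − ((x¹₁−1)/x¹₂) x₂ )₊^{n₁−1} ( u − (x¹₁/x¹₂) x₂ )₊^{n₂−1} (x₁−u)₊^{n₃−1} du. Then for x = (x₁,x₂) ∈ ℝ²: if x₂ ≥ 0, C_𝐧(x | X) = (1/x¹₂) Σ_{k=0}^{n₁−1} binom(n₂+k−1, k) (1/((n₁−1−k)! (n₂+n₃+k−1)!)) (x₂/x¹₂)^{n₁−1−k} ( x₁ − (x¹₁/x¹₂) x₂ )₊^{n₂+n₃+k−1}; and if x₂ < 0, C_𝐧(x | X) = (1/x¹₂) Σ_{k=0}^{n₂−1} binom(n₁+k−1, k) (1/((n₂−1−k)! (n₁+n₃+k−1)!))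 ( −x₂/x¹₂ )^{n₂−1−k} ( x₁ − ((x¹₁−1)/x¹₂) x₂ )₊^{n₁+n₃+k−1}. -/
open MeasureTheory

/-- Truncated power: `t₊^m`, with `t₊⁰` the indicator of `t ≥ 0`. -/
noncomputable def truncPow (t : ℝ) (m : ℕ) : ℝ := if 0 ≤ t then t ^ m else 0

open intervalIntegral

/-- Polynomial beta integral on `[b, c]`. -/
lemma beta_poly (r : ℕ) : ∀ (m : ℕ) (b c : ℝ), b ≤ c →
    ∫ u in b..c, (u - b) ^ m * (c - u) ^ r
      = m.factorial * r.factorial / (m + r + 1).factorial * (c - b) ^ (m + r + 1) := by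
  induction r with
  | zero =>
    intro m b c _
    simp only [pow_zero, mul_one, Nat.factorial_zero, Nat.cast_one]
    rw [show (fun u : ℝ => (u - b) ^ m) = fun u => (u - b) ^ m from rfl]
    rw [intervalIntegral.integral_comp_sub_right (fun u => u ^ m) b, integral_pow]
    simp [Nat.factorial_succ]
    field_simp
  | succ r ih =>
    intro m b c hbc
    -- integration by parts
    have hu : ∀ x ∈ Set.uIcc b c, HasDerivAt (fun x : ℝ => (c - x) ^ (r + 1))
        (-((r+1) * (c - x) ^ r)) x := by
      intro x _
      have h1 : HasDerivAt (fun x : ℝ => c - x) (-1) x := by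
        simpa using (hasDerivAt_id x).const_sub c
      have : HasDerivAt (fun x : ℝ => (c - x) ^ (r + 1)) _ x := h1.pow (r + 1)
      convert this using 1
      push_cast; ring
    have hv : ∀ x ∈ Set.uIcc b c, HasDerivAt (fun x : ℝ => (m + 1 : ℝ)⁻¹ * (x - b) ^ (m + 1))
        ((x - b) ^ m) x := by
      intro x _
      have h1 : HasDerivAt (fun x : ℝ => x - b) 1 x := (hasDerivAt_id x).sub_const b
      have : HasDerivAt (fun x : ℝ => (m + 1 : ℝ)⁻¹ * (x - b) ^ (m + 1)) _ x :=
        (show HasDerivAt (fun x : ℝ => (x - b) ^ (m + 1)) _ x from h1.pow (m + 1)).const_mul (m + 1 : ℝ)⁻¹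
      convert this using 1
      have : (m + 1 : ℝ) ≠ 0 := by positivity
      push_cast
      field_simp
    have hIu : IntervalIntegrable (fun x : ℝ => -((r+1 : ℝ) * (c - x) ^ r)) volume b c :=
      (Continuous.intervalIntegrable (by continuity) b c)
    have hIv : IntervalIntegrable (fun x : ℝ => (x - b) ^ m) volume b c :=
      (Continuous.intervalIntegrable (by continuity) b c)
    have parts := intervalIntegral.integral_mul_deriv_eq_deriv_mul hu hv hIu hIv
    simp only [sub_self, zero_pow (Nat.succ_ne_zero r), zero_pow (Nat.succ_ne_zero m),
      zero_mul, mul_zero, sub_zero, zero_sub] at parts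
    have e1 : ∫ x in b..c, (x - b) ^ m * (c - x) ^ (r + 1)
        = ∫ x in b..c, (c - x) ^ (r + 1) * (x - b) ^ m :=
      intervalIntegral.integral_congr fun x _ => by ring
    have e2 : ∫ x in b..c, -((r + 1 : ℝ) * (c - x) ^ r) * ((m + 1 : ℝ)⁻¹ * (x - b) ^ (m + 1))
        = -((r + 1 : ℝ) * (m + 1 : ℝ)⁻¹) * ∫ x in b..c, (x - b) ^ (m + 1) * (c - x) ^ r := by
      rw [← intervalIntegral.integral_const_mul]
      exact intervalIntegral.integral_congr fun x _ => by ring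
    rw [e1, parts, e2, ih (m + 1) b c hbc]
    have h2 : m + 1 + r + 1 = m + (r + 1) + 1 := by omega
    rw [h2, show m + (r + 1) + 1 = (m + r + 1) + 1 from by omega, Nat.factorial_succ (m + r + 1),
      Nat.factorial_succ m, Nat.factorial_succ r]
    have hm : (m : ℝ) + 1 ≠ 0 := by positivity
    have hf1 : (m.factorial : ℝ) ≠ 0 := by exact_mod_cast m.factorial_ne_zero
    have hf2 : ((m + r + 1).factorial : ℝ) ≠ 0 := by exact_mod_cast (m + r + 1).factorial_ne_zero
    push_cast
    field_simp

lemma truncPow_prod_eq_indicator (b c : ℝ) (m r : ℕ) :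
    (fun u => truncPow (u - b) m * truncPow (c - u) r)
      = (Set.Icc b c).indicator (fun u => (u - b) ^ m * (c - u) ^ r) := by
  funext u
  rcases le_or_gt 0 (u - b) with h1 | h1 <;> rcases le_or_gt 0 (c - u) with h2 | h2
  · rw [Set.indicator_of_mem (Set.mem_Icc.2 ⟨by linarith, by linarith⟩)]
    simp [truncPow, h1, h2]
  · rw [Set.indicator_of_notMem (by simp only [Set.mem_Icc, not_and]; intro _; linarith)]
    simp [truncPow, not_le.2 h2]
  · rw [Set.indicator_of_notMem (by simp only [Set.mem_Icc, not_and]; intro h; linarith)]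
    simp [truncPow, not_le.2 h1]
  · rw [Set.indicator_of_notMem (by simp only [Set.mem_Icc, not_and]; intro h; linarith)]
    simp [truncPow, not_le.2 h1]

lemma truncPow_prod_integrableOn (b c : ℝ) (m r : ℕ) :
    IntegrableOn (fun u => truncPow (u - b) m * truncPow (c - u) r) (Set.Iic c) := by
  rw [truncPow_prod_eq_indicator]
  refine Integrable.integrableOn ?_
  rw [integrable_indicator_iff measurableSet_Icc]
  exact (Continuous.integrableOn_Icc (by continuity))

lemma setIntegral_truncPow_mul (b c : ℝ) (m r : ℕ) :
    ∫ u in Set.Iic c, truncPow (u - b) m * truncPow (c - u) r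
      = m.factorial * r.factorial / (m + r + 1).factorial * truncPow (c - b) (m + r + 1) := by
  rw [truncPow_prod_eq_indicator, setIntegral_indicator measurableSet_Icc,
    Set.inter_eq_self_of_subset_right Set.Icc_subset_Iic_self]
  by_cases hbc : b ≤ c
  · rw [integral_Icc_eq_integral_Ioc, ← intervalIntegral.integral_of_le hbc,
      beta_poly r m b c hbc]
    rw [truncPow, if_pos (by linarith : (0:ℝ) ≤ c - b)]
  · rw [Set.Icc_eq_empty hbc]
    simp [truncPow, if_neg, show ¬ (0:ℝ) ≤ c - b from by intro h; exact hbc (by linarith)]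

lemma master (a b c : ℝ) (hab : a ≤ b) (p q r : ℕ) :
    ∫ u in Set.Iic c, truncPow (u - a) p * truncPow (u - b) q * truncPow (c - u) r
      = ∑ j ∈ Finset.range (p + 1), (p.choose j : ℝ) * (b - a) ^ (p - j) *
          ((q + j).factorial * r.factorial / (q + j + r + 1).factorial) *
          truncPow (c - b) (q + j + r + 1) := by
  have hfun : ∀ u, truncPow (u - a) p * truncPow (u - b) q * truncPow (c - u) r
      = ∑ j ∈ Finset.range (p + 1), (p.choose j : ℝ) * (b - a) ^ (p - j) *
          (truncPow (u - b) (q + j) * truncPow (c - u) r) := by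
    intro u
    by_cases h : 0 ≤ u - b
    · have ha : 0 ≤ u - a := by linarith
      rw [show truncPow (u - a) p = (u - a) ^ p from if_pos ha,
        show truncPow (u - b) q = (u - b) ^ q from if_pos h]
      rw [show u - a = (u - b) + (b - a) from by ring, add_pow]
      rw [Finset.sum_mul, Finset.sum_mul]
      refine Finset.sum_congr rfl fun j hj => ?_
      rw [show truncPow (u - b) (q + j) = (u - b) ^ (q + j) from if_pos h, pow_add]
      ring
    · rw [show truncPow (u - b) q = 0 from if_neg h]
      simp [show ∀ j, truncPow (u - b) (q + j) = 0 from fun j => if_neg h]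
  rw [show (fun u => truncPow (u - a) p * truncPow (u - b) q * truncPow (c - u) r)
      = fun u => ∑ j ∈ Finset.range (p + 1), (p.choose j : ℝ) * (b - a) ^ (p - j) *
          (truncPow (u - b) (q + j) * truncPow (c - u) r) from funext hfun]
  rw [integral_finset_sum _ fun j _ =>
    ((truncPow_prod_integrableOn b c (q + j) r).const_mul _)]
  refine Finset.sum_congr rfl fun j _ => ?_
  rw [MeasureTheory.integral_const_mul, setIntegral_truncPow_mul b c (q + j) r]
  ring
/-- explicit formula for the cone spline `C_𝐧(x | X)` on the
3-directional mesh `X = {x¹, x², x³}` with `x³ = x¹ + x² = (1,0)ᵀ` and `x¹₂ > 0`,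
where `x¹ = (x11, x12)ᵀ`.  The spline is given by its time-domain integral
representation. -/
theorem coneSpline_three_directional_mesh
    (x11 x12 : ℝ) (h12 : 0 < x12)
    (n₁ n₂ n₃ : ℕ) (h1 : 0 < n₁) (h2 : 0 < n₂) (h3 : 0 < n₃)
    (x₁ x₂ : ℝ)
    (C : ℝ)
    (hC : C = (x12 * (n₁ - 1).factorial * (n₂ - 1).factorial * (n₃ - 1).factorial)⁻¹ *
        ∫ u in Set.Iic x₁,
          truncPow (u - (x11 - 1) / x12 * x₂) (n₁ - 1) *
            truncPow (u - x11 / x12 * x₂) (n₂ - 1) * truncPow (x₁ - u) (n₃ - 1)) :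
    (0 ≤ x₂ →
      C = (1 / x12) * ∑ k ∈ Finset.range n₁,
        ((n₂ + k - 1).choose k : ℝ) *
          (1 / ((n₁ - 1 - k).factorial * (n₂ + n₃ + k - 1).factorial)) *
          (x₂ / x12) ^ (n₁ - 1 - k) *
          truncPow (x₁ - x11 / x12 * x₂) (n₂ + n₃ + k - 1)) ∧
    (x₂ < 0 →
      C = (1 / x12) * ∑ k ∈ Finset.range n₂,
        ((n₁ + k - 1).choose k : ℝ) *
          (1 / ((n₂ - 1 - k).factorial * (n₁ + n₃ + k - 1).factorial)) *
          (-x₂ / x12) ^ (n₂ - 1 - k) *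
          truncPow (x₁ - (x11 - 1) / x12 * x₂) (n₁ + n₃ + k - 1)) := by
  have hx12 : x12 ≠ 0 := ne_of_gt h12
  constructor
  · intro hx2
    have hba : x11 / x12 * x₂ - (x11 - 1) / x12 * x₂ = x₂ / x12 := by field_simp; ring
    have hab : (x11 - 1) / x12 * x₂ ≤ x11 / x12 * x₂ := by
      have := div_nonneg hx2 h12.le; linarith
    rw [hC, master _ _ x₁ hab (n₁ - 1) (n₂ - 1) (n₃ - 1),
      show n₁ - 1 + 1 = n₁ from by omega, Finset.mul_sum, Finset.mul_sum]
    refine Finset.sum_congr rfl fun k hk => ?_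
    have hkp : k ≤ n₁ - 1 := by
      have := Finset.mem_range.1 hk; omega
    have e1 : n₂ - 1 + k + (n₃ - 1) + 1 = n₂ + n₃ + k - 1 := by omega
    have e2 : n₂ + k - 1 = n₂ - 1 + k := by omega
    rw [hba, e1, e2, Nat.cast_choose ℝ hkp, Nat.cast_choose ℝ (Nat.le_add_left k (n₂ - 1)),
      Nat.add_sub_cancel]
    have f1 : ((n₁ - 1).factorial : ℝ) ≠ 0 := by exact_mod_cast (n₁ - 1).factorial_ne_zero
    have f2 : ((n₂ - 1).factorial : ℝ) ≠ 0 := by exact_mod_cast (n₂ - 1).factorial_ne_zero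
    have f3 : ((n₃ - 1).factorial : ℝ) ≠ 0 := by exact_mod_cast (n₃ - 1).factorial_ne_zero
    have f4 : (k.factorial : ℝ) ≠ 0 := by exact_mod_cast k.factorial_ne_zero
    have f5 : ((n₁ - 1 - k).factorial : ℝ) ≠ 0 := by exact_mod_cast (n₁ - 1 - k).factorial_ne_zero
    have f6 : ((n₂ - 1 + k).factorial : ℝ) ≠ 0 := by exact_mod_cast (n₂ - 1 + k).factorial_ne_zero
    have f7 : ((n₂ + n₃ + k - 1).factorial : ℝ) ≠ 0 := by
      exact_mod_cast (n₂ + n₃ + k - 1).factorial_ne_zero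
    field_simp
  · intro hx2
    have hba : (x11 - 1) / x12 * x₂ - x11 / x12 * x₂ = -x₂ / x12 := by field_simp; ring
    have hab : x11 / x12 * x₂ ≤ (x11 - 1) / x12 * x₂ := by
      have : 0 ≤ -x₂ / x12 := div_nonneg (by linarith) h12.le
      linarith
    have comm : (fun u => truncPow (u - (x11 - 1) / x12 * x₂) (n₁ - 1) *
          truncPow (u - x11 / x12 * x₂) (n₂ - 1) * truncPow (x₁ - u) (n₃ - 1))
        = fun u => truncPow (u - x11 / x12 * x₂) (n₂ - 1) *
          truncPow (u - (x11 - 1) / x12 * x₂) (n₁ - 1) * truncPow (x₁ - u) (n₃ - 1) :=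
      funext fun u => by ring
    rw [hC, comm, master _ _ x₁ hab (n₂ - 1) (n₁ - 1) (n₃ - 1),
      show n₂ - 1 + 1 = n₂ from by omega, Finset.mul_sum, Finset.mul_sum]
    refine Finset.sum_congr rfl fun k hk => ?_
    have hkp : k ≤ n₂ - 1 := by
      have := Finset.mem_range.1 hk; omega
    have e1 : n₁ - 1 + k + (n₃ - 1) + 1 = n₁ + n₃ + k - 1 := by omega
    have e2 : n₁ + k - 1 = n₁ - 1 + k := by omega
    rw [hba, e1, e2, Nat.cast_choose ℝ hkp, Nat.cast_choose ℝ (Nat.le_add_left k (n₁ - 1)),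
      Nat.add_sub_cancel]
    have f1 : ((n₁ - 1).factorial : ℝ) ≠ 0 := by exact_mod_cast (n₁ - 1).factorial_ne_zero
    have f2 : ((n₂ - 1).factorial : ℝ) ≠ 0 := by exact_mod_cast (n₂ - 1).factorial_ne_zero
    have f3 : ((n₃ - 1).factorial : ℝ) ≠ 0 := by exact_mod_cast (n₃ - 1).factorial_ne_zero
    have f4 : (k.factorial : ℝ) ≠ 0 := by exact_mod_cast k.factorial_ne_zero
    have f5 : ((n₂ - 1 - k).factorial : ℝ) ≠ 0 := by exact_mod_cast (n₂ - 1 - k).factorial_ne_zero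
    have f6 : ((n₁ - 1 + k).factorial : ℝ) ≠ 0 := by exact_mod_cast (n₁ - 1 + k).factorial_ne_zero
    have f7 : ((n₁ + n₃ + k - 1).factorial : ℝ) ≠ 0 := by
      exact_mod_cast (n₁ + n₃ + k - 1).factorial_ne_zero
    field_simp
end

section
/- Let x¹,…,xˢ be linearly independent vectors in ℝˢ with dual basis x̃¹,…,x̃ˢ and M = [x¹ ⋯ xˢ]. For α ∈ ℝ₊ˢ define C_α(x | X) = |det M|⁻¹ Π_{k=1}^{s} ⟨x, x̃ᵏ⟩₊^{α_k−1}/Γ(α_k). Suppose α_k > 1 for every k (so that α − eᵏ ∈ ℝ₊ˢ for each canonical basis vector eᵏ of ℝˢ) and |α| := α₁+⋯+αₛ ≠ s. Then for every x ∈ ℝˢ, C_α(x | X) = (1/(|α|−s)) Σ_{k=1}^{s} ⟨x, x̃ᵏ⟩ C_{α−eᵏ}(x | X). -/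
/-- Truncated real power: `t₊^β = t^β` for `t > 0` and `0` for `t ≤ 0`. -/
noncomputable def truncRPow (t β : ℝ) : ℝ := if 0 < t then t ^ β else 0

/-- The fractional cone spline `C_α(x | X)` for `s` linearly independent knots
`x¹,…,xˢ ⊂ ℝˢ` with dual basis `x̃¹,…,x̃ˢ`:
`C_α(x|X) = |det M|⁻¹ Π_k ⟨x, x̃ᵏ⟩₊^{α_k−1}/Γ(α_k)`. -/
noncomputable def fracConeSpline (s : ℕ) (x xt : Fin s → Fin s → ℝ)
    (α : Fin s → ℝ) (p : Fin s → ℝ) : ℝ :=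
  |(Matrix.of fun i j => x j i).det|⁻¹ *
    ∏ k, truncRPow (∑ i, p i * xt k i) (α k - 1) / Real.Gamma (α k)

/-- recurrence relation for fractional cone splines:
`C_α(x|X) = (|α|−s)⁻¹ Σ_k ⟨x, x̃ᵏ⟩ C_{α−eᵏ}(x|X)` whenever each `α_k > 1`
and `|α| ≠ s`. -/
theorem fracConeSpline_recurrence
    (s : ℕ) (hs : 0 < s) (x xt : Fin s → Fin s → ℝ)
    (hindep : LinearIndependent ℝ x)
    (hdual : ∀ j k, (∑ i, x j i * xt k i) = if j = k then (1 : ℝ) else 0)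
    (α : Fin s → ℝ) (hα : ∀ k, 1 < α k) (hαs : (∑ k, α k) ≠ s) :
    ∀ p : Fin s → ℝ,
      fracConeSpline s x xt α p =
        (1 / ((∑ k, α k) - s)) *
          ∑ k, (∑ i, p i * xt k i) *
            fracConeSpline s x xt (fun j => α j - if j = k then 1 else 0) p := by
  intro p
  have hkey : ∀ k, (∑ i, p i * xt k i) *
      fracConeSpline s x xt (fun j => α j - if j = k then 1 else 0) p
      = (α k - 1) * fracConeSpline s x xt α p := by
    intro k
    unfold fracConeSpline
    simp only []
    have hne1 : α k - 1 ≠ 0 := by have := hα k; intro h; nlinarith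
    have hΓ : Real.Gamma (α k) = (α k - 1) * Real.Gamma (α k - 1) := by
      have h := Real.Gamma_add_one (s := α k - 1) hne1
      rw [show α k - 1 + 1 = α k by ring] at h
      exact h
    have hΓ1 : Real.Gamma (α k - 1) ≠ 0 :=
      (Real.Gamma_pos_of_pos (by linarith [hα k])).ne'
    have hterm : (∑ i, p i * xt k i) *
        (truncRPow (∑ i, p i * xt k i) (α k - 1 - 1) / Real.Gamma (α k - 1))
        = (α k - 1) * (truncRPow (∑ i, p i * xt k i) (α k - 1) / Real.Gamma (α k)) := by
      unfold truncRPow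
      by_cases h : 0 < (∑ i, p i * xt k i)
      · simp only [if_pos h]
        have hr : (∑ i, p i * xt k i) ^ (α k - 1 - 1) * (∑ i, p i * xt k i)
            = (∑ i, p i * xt k i) ^ (α k - 1) := by
          rw [← Real.rpow_add_one h.ne', sub_add_cancel]
        rw [hΓ, ← hr]
        field_simp
      · simp only [if_neg h, zero_div, mul_zero]
    rw [Finset.prod_eq_mul_prod_sdiff_singleton_of_mem (Finset.mem_univ k)
        (fun j => truncRPow (∑ i, p i * xt j i) ((α j - if j = k then 1 else 0) - 1) /
          Real.Gamma (α j - if j = k then 1 else 0)),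
      Finset.prod_eq_mul_prod_sdiff_singleton_of_mem (Finset.mem_univ k)
        (fun j => truncRPow (∑ i, p i * xt j i) (α j - 1) / Real.Gamma (α j))]
    have hrest : ∏ j ∈ Finset.univ \ {k},
        truncRPow (∑ i, p i * xt j i) ((α j - if j = k then 1 else 0) - 1) /
          Real.Gamma (α j - if j = k then 1 else 0)
        = ∏ j ∈ Finset.univ \ {k},
            truncRPow (∑ i, p i * xt j i) (α j - 1) / Real.Gamma (α j) := by
      refine Finset.prod_congr rfl fun j hj => ?_
      have hjk : j ≠ k := by simpa using (Finset.mem_sdiff.mp hj).2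
      rw [if_neg hjk, sub_zero]
    rw [hrest, if_pos rfl]
    linear_combination (|(Matrix.of fun i j => x j i).det|⁻¹ *
      ∏ j ∈ Finset.univ \ {k},
        truncRPow (∑ i, p i * xt j i) (α j - 1) / Real.Gamma (α j)) * hterm
  have hsum : ∑ k, (∑ i, p i * xt k i) *
      fracConeSpline s x xt (fun j => α j - if j = k then 1 else 0) p
      = ((∑ k, α k) - s) * fracConeSpline s x xt α p := by
    rw [Finset.sum_congr rfl (fun k _ => hkey k), ← Finset.sum_mul]
    congr 1
    rw [Finset.sum_sub_distrib]
    simp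
  rw [hsum]
  have hne : (∑ k, α k) - (s : ℝ) ≠ 0 := sub_ne_zero.mpr hαs
  field_simp
end

section
/- Let X = {x¹, x², x³} ⊂ ℝ² be a 3-directional mesh with x³ = x¹ + x² = (1,0)ᵀ and let α ∈ ℝ₊³ with |α| = α₁+α₂+α₃. Let B̂_α(ω | X⁻) = ( (1−e^{−i⟨ω,x¹⟩})/(i⟨ω,x¹⟩) )^{α₁} ( (1−e^{−i⟨ω,x²⟩})/(i⟨ω,x²⟩) )^{α₂} ( (e^{i⟨ω,x³⟩}−1)/(i⟨ω,x³⟩) )^{α₃} denote the Fourier transform of the fractional hex spline. Then for almost every ω ∈ ℝ², 2 B̂_α(2ω | X⁻) = 2^{1−|α|} (1 + e^{−i⟨ω,x¹⟩})^{α₁} (1 + e^{−i⟨ω,x²⟩})^{α₂} (1 + e^{i⟨ω,x³⟩})^{α₃} · B̂_α(ω | X⁻); that is, the refinement filter H_α(ω) := 2 B̂_α(2ω|X⁻)/B̂_α(ω|X⁻) equals 2^{1−|α|}(1+e^{−i⟨ω,x¹⟩})^{α₁}(1+e^{−i⟨ω,x²⟩})^{α₂}(1+e^{i⟨ω,x³⟩})^{α₃}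 almost everywhere. -/
open MeasureTheory

/-- `(1 − e^{−iu})/(iu)`, continuously extended by `1` at `u = 0`. -/
noncomputable def phiM (u : ℝ) : ℂ :=
  if u = 0 then 1 else (1 - Complex.exp (-Complex.I * u)) / (Complex.I * u)

/-- `(e^{iu} − 1)/(iu)`, continuously extended by `1` at `u = 0`. -/
noncomputable def phiP (u : ℝ) : ℂ :=
  if u = 0 then 1 else (Complex.exp (Complex.I * u) - 1) / (Complex.I * u)

/-- The Fourier transform `B̂_α(ω | X⁻)` of the fractional hex spline of order
`α = (α₁,α₂,α₃)` on the 3-directional mesh `X = {x¹, x², x¹+x²}`, with principal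
branch powers. -/
noncomputable def fracHexFT (x1 x2 : Fin 2 → ℝ) (α₁ α₂ α₃ : ℝ) (ω : Fin 2 → ℝ) : ℂ :=
  phiM (∑ i, ω i * x1 i) ^ (α₁ : ℂ) * phiM (∑ i, ω i * x2 i) ^ (α₂ : ℂ) *
    phiP (∑ i, ω i * (x1 i + x2 i)) ^ (α₃ : ℂ)

section
variable {u : ℝ}

-- exp(-I u) as a square of cos(u/2) - i sin(u/2)
lemma exp_neg_I_eq (u : ℝ) :
    Complex.exp (-Complex.I * u) = (((Real.cos (u/2) : ℝ) : ℂ) - (Real.sin (u/2) : ℝ) * Complex.I) ^ 2 := by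
  have h : Complex.exp (-Complex.I * u) = Complex.exp ((((-(u/2)) : ℝ) : ℂ) * Complex.I) ^ 2 := by
    rw [← Complex.exp_nat_mul]
    congr 1
    push_cast
    ring
  rw [h, Complex.exp_mul_I, Complex.ofReal_neg, Complex.cos_neg, Complex.sin_neg,
    Complex.ofReal_cos, Complex.ofReal_sin]
  ring

lemma exp_I_eq (u : ℝ) :
    Complex.exp (Complex.I * u) = (((Real.cos (u/2) : ℝ) : ℂ) + (Real.sin (u/2) : ℝ) * Complex.I) ^ 2 := by
  have h : Complex.exp (Complex.I * u) = Complex.exp ((((u/2) : ℝ) : ℂ) * Complex.I) ^ 2 := by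
    rw [← Complex.exp_nat_mul]; congr 1; push_cast; ring
  rw [h, Complex.exp_mul_I, ← Complex.ofReal_cos, ← Complex.ofReal_sin]

end

section
variable {u : ℝ} (hu : u ≠ 0) (hs : Real.sin (u/2) ≠ 0) (hc : Real.cos (u/2) ≠ 0)

lemma pyth (u : ℝ) : ((Real.cos (u/2) : ℝ) : ℂ)^2 + ((Real.sin (u/2) : ℝ) : ℂ)^2 = 1 := by
  rw [← Complex.ofReal_pow, ← Complex.ofReal_pow, ← Complex.ofReal_add, ← Complex.ofReal_one]
  norm_cast
  rw [add_comm]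
  exact Real.sin_sq_add_cos_sq (u/2)

include hu in
lemma phiM_eq : phiM u =
    ((Real.sin (u/2) / (u/2) : ℝ) : ℂ) *
      (((Real.cos (u/2) : ℝ) : ℂ) - (Real.sin (u/2) : ℝ) * Complex.I) := by
  have hu' : (u : ℂ) ≠ 0 := Complex.ofReal_ne_zero.mpr hu
  have hC : Complex.sin ((u:ℂ)/2)^2 + Complex.cos ((u:ℂ)/2)^2 = 1 := Complex.sin_sq_add_cos_sq _
  rw [phiM, if_neg hu, exp_neg_I_eq]
  push_cast
  field_simp
  linear_combination (-1 : ℂ) * hC + Complex.sin ((u:ℂ)/2)^2 * Complex.I_sq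

include hu in
lemma phiP_eq : phiP u =
    ((Real.sin (u/2) / (u/2) : ℝ) : ℂ) *
      (((Real.cos (u/2) : ℝ) : ℂ) + (Real.sin (u/2) : ℝ) * Complex.I) := by
  have hu' : (u : ℂ) ≠ 0 := Complex.ofReal_ne_zero.mpr hu
  have hC : Complex.sin ((u:ℂ)/2)^2 + Complex.cos ((u:ℂ)/2)^2 = 1 := Complex.sin_sq_add_cos_sq _
  rw [phiP, if_neg hu, exp_I_eq]
  push_cast
  field_simp
  linear_combination hC - Complex.sin ((u:ℂ)/2)^2 * Complex.I_sq

lemma filtM_eq : (1 + Complex.exp (-Complex.I * u)) / 2 =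
    ((Real.cos (u/2) : ℝ) : ℂ) *
      (((Real.cos (u/2) : ℝ) : ℂ) - (Real.sin (u/2) : ℝ) * Complex.I) := by
  have hC : Complex.sin ((u:ℂ)/2)^2 + Complex.cos ((u:ℂ)/2)^2 = 1 := Complex.sin_sq_add_cos_sq _
  rw [exp_neg_I_eq]
  push_cast
  field_simp
  linear_combination (-1 : ℂ) * hC + Complex.sin ((u:ℂ)/2)^2 * Complex.I_sq

lemma filtP_eq : (1 + Complex.exp (Complex.I * u)) / 2 =
    ((Real.cos (u/2) : ℝ) : ℂ) *
      (((Real.cos (u/2) : ℝ) : ℂ) + (Real.sin (u/2) : ℝ) * Complex.I) := by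
  have hC : Complex.sin ((u:ℂ)/2)^2 + Complex.cos ((u:ℂ)/2)^2 = 1 := Complex.sin_sq_add_cos_sq _
  rw [exp_I_eq]
  push_cast
  field_simp
  linear_combination (-1 : ℂ) * hC + Complex.sin ((u:ℂ)/2)^2 * Complex.I_sq

end

-- ### branch-condition lemmas (copied from aux.lean, will be merged)
lemma arg_add_arg_mem {w : ℂ} (hw : 0 < w.re) {μ : ℝ} (hμ : μ ≠ 0) :
    Complex.arg ((μ : ℂ) * w) + Complex.arg w ∈ Set.Ioc (-Real.pi) Real.pi := by
  have haw : |Complex.arg w| < Real.pi / 2 :=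
    Complex.abs_arg_lt_pi_div_two_iff.mpr (Or.inl hw)
  have haw' := abs_lt.mp haw
  rcases lt_or_gt_of_ne hμ with hneg | hpos
  · have hz : (μ : ℂ) * w = ((-μ : ℝ) : ℂ) * (-w) := by push_cast; ring
    rw [hz, Complex.arg_real_mul _ (by linarith : (0:ℝ) < -μ)]
    rcases lt_trichotomy w.im 0 with him | him | him
    · rw [Complex.arg_neg_eq_arg_add_pi_of_im_neg him]
      have h1 : Complex.arg w < 0 := Complex.arg_neg_iff.mpr him
      constructor <;> linarith
    · have hwre : w = ((w.re : ℝ) : ℂ) := Complex.ext rfl (by simp [him])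
      rw [hwre, ← Complex.ofReal_neg, Complex.arg_ofReal_of_neg (by linarith),
        Complex.arg_ofReal_of_nonneg hw.le]
      exact ⟨by linarith [Real.pi_pos], by linarith⟩
    · rw [Complex.arg_neg_eq_arg_sub_pi_of_im_pos him]
      have h0 : 0 ≤ Complex.arg w := by
        by_contra h
        exact absurd (Complex.arg_neg_iff.mp (lt_of_not_ge h)) (by linarith)
      have h1 : Complex.arg w ≠ 0 := fun h =>
        him.ne' ((Complex.arg_eq_zero_iff.mp h).2)
      constructor <;> [linarith [lt_of_le_of_ne h0 (Ne.symm h1)]; linarith]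
  · rw [Complex.arg_real_mul _ hpos]
    constructor <;> linarith

lemma mul_cpow_arg {z w : ℂ} (hz : z ≠ 0) (hw : w ≠ 0)
    (h : z.arg + w.arg ∈ Set.Ioc (-Real.pi) Real.pi) (α : ℂ) :
    (z * w) ^ α = z ^ α * w ^ α := by
  rw [Complex.cpow_def_of_ne_zero (mul_ne_zero hz hw), Complex.log_mul hz hw h, add_mul,
    Complex.exp_add, ← Complex.cpow_def_of_ne_zero hz, ← Complex.cpow_def_of_ne_zero hw]

lemma cpow_mul_ofReal_pos {x : ℂ} (hx : x ≠ 0) {r : ℝ} (hr : 0 < r) (α : ℂ) :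
    (x * (r : ℂ)) ^ α = x ^ α * ((r : ℂ)) ^ α := by
  have hr0 : (r : ℂ) ≠ 0 := Complex.ofReal_ne_zero.mpr hr.ne'
  rw [Complex.cpow_def_of_ne_zero (mul_ne_zero hx hr0), Complex.log_mul_ofReal r hr x hx,
    add_mul, Complex.exp_add, ← Complex.cpow_def_of_ne_zero hx,
    Complex.cpow_def_of_ne_zero hr0, ← Complex.ofReal_log hr.le, mul_comm]


lemma im_auxM (c s : ℝ) : (((c:ℝ):ℂ) - ((s:ℝ):ℂ) * Complex.I).im = -s := by simp
lemma im_auxP (c s : ℝ) : (((c:ℝ):ℂ) + ((s:ℝ):ℂ) * Complex.I).im = s := by simp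
lemma re_auxM (c s : ℝ) : (((c:ℝ):ℂ) * (((c:ℝ):ℂ) - ((s:ℝ):ℂ) * Complex.I)).re = c * c := by
  simp [Complex.mul_re]
lemma re_auxP (c s : ℝ) : (((c:ℝ):ℂ) * (((c:ℝ):ℂ) + ((s:ℝ):ℂ) * Complex.I)).re = c * c := by
  simp [Complex.mul_re]

-- ### key refinement per factor
section
variable {u : ℝ} (hu : u ≠ 0) (hs : Real.sin (u/2) ≠ 0) (hc : Real.cos (u/2) ≠ 0)

include hu hs hc in
lemma phiM_refine (α : ℝ) :
    phiM (2*u) ^ (α : ℂ) =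
      phiM u ^ (α : ℂ) * ((1 + Complex.exp (-Complex.I * u)) / 2) ^ (α : ℂ) := by
  set w : ℂ := (1 + Complex.exp (-Complex.I * u)) / 2 with hwdef
  have hwe : w = ((Real.cos (u/2) : ℝ) : ℂ) *
      (((Real.cos (u/2) : ℝ) : ℂ) - (Real.sin (u/2) : ℝ) * Complex.I) := filtM_eq
  have hze := phiM_eq hu
  have h2u : (2:ℝ)*u ≠ 0 := by simpa using hu
  have factor : phiM (2*u) = phiM u * w := by
    have he2 : Complex.exp (-Complex.I * ((2*u : ℝ) : ℂ)) =
        Complex.exp (-Complex.I * u) ^ 2 := by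
      rw [← Complex.exp_nat_mul]; congr 1; push_cast; ring
    rw [hwdef, phiM, phiM, if_neg h2u, if_neg hu, he2]
    have hu' : (u : ℂ) ≠ 0 := Complex.ofReal_ne_zero.mpr hu
    push_cast
    field_simp
    ring
  have hz0 : phiM u ≠ 0 := by
    rw [hze]
    apply mul_ne_zero
    · exact Complex.ofReal_ne_zero.mpr (div_ne_zero hs (by simpa using hu))
    · intro h
      apply hs
      have h2 : -Real.sin (u/2) = 0 := by
        rw [← im_auxM (Real.cos (u/2)) (Real.sin (u/2)), h, Complex.zero_im]
      linarith
  have hwre : 0 < w.re := by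
    have : w.re = Real.cos (u/2) * Real.cos (u/2) := by
      rw [hwe, re_auxM]
    rw [this]
    exact mul_self_pos.mpr hc
  have hw0 : w ≠ 0 := fun h => by simp [h] at hwre
  set μ : ℝ := Real.sin (u/2) / (u/2) / Real.cos (u/2) with hμdef
  have hμ0 : μ ≠ 0 := div_ne_zero (div_ne_zero hs (by simpa using hu)) hc
  have hzw : phiM u = (μ : ℂ) * w := by
    rw [hze, hwe, ← mul_assoc, ← Complex.ofReal_mul, hμdef, div_mul_cancel₀ _ hc]
  have harg : (phiM u).arg + w.arg ∈ Set.Ioc (-Real.pi) Real.pi := by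
    rw [hzw]; exact arg_add_arg_mem hwre hμ0
  rw [factor, mul_cpow_arg hz0 hw0 harg]

include hu hs hc in
lemma phiP_refine (α : ℝ) :
    phiP (2*u) ^ (α : ℂ) =
      phiP u ^ (α : ℂ) * ((1 + Complex.exp (Complex.I * u)) / 2) ^ (α : ℂ) := by
  set w : ℂ := (1 + Complex.exp (Complex.I * u)) / 2 with hwdef
  have hwe : w = ((Real.cos (u/2) : ℝ) : ℂ) *
      (((Real.cos (u/2) : ℝ) : ℂ) + (Real.sin (u/2) : ℝ) * Complex.I) := filtP_eq
  have hze := phiP_eq hu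
  have h2u : (2:ℝ)*u ≠ 0 := by simpa using hu
  have factor : phiP (2*u) = phiP u * w := by
    have he2 : Complex.exp (Complex.I * ((2*u : ℝ) : ℂ)) =
        Complex.exp (Complex.I * u) ^ 2 := by
      rw [← Complex.exp_nat_mul]; congr 1; push_cast; ring
    rw [hwdef, phiP, phiP, if_neg h2u, if_neg hu, he2]
    have hu' : (u : ℂ) ≠ 0 := Complex.ofReal_ne_zero.mpr hu
    push_cast
    field_simp
    ring
  have hz0 : phiP u ≠ 0 := by
    rw [hze]
    apply mul_ne_zero
    · exact Complex.ofReal_ne_zero.mpr (div_ne_zero hs (by simpa using hu))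
    · intro h
      apply hs
      have h2 : Real.sin (u/2) = 0 := by
        rw [← im_auxP (Real.cos (u/2)) (Real.sin (u/2)), h, Complex.zero_im]
      exact h2
  have hwre : 0 < w.re := by
    have : w.re = Real.cos (u/2) * Real.cos (u/2) := by
      rw [hwe, re_auxP]
    rw [this]
    exact mul_self_pos.mpr hc
  have hw0 : w ≠ 0 := fun h => by simp [h] at hwre
  set μ : ℝ := Real.sin (u/2) / (u/2) / Real.cos (u/2) with hμdef
  have hμ0 : μ ≠ 0 := div_ne_zero (div_ne_zero hs (by simpa using hu)) hc
  have hzw : phiP u = (μ : ℂ) * w := by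
    rw [hze, hwe, ← mul_assoc, ← Complex.ofReal_mul, hμdef, div_mul_cancel₀ _ hc]
  have harg : (phiP u).arg + w.arg ∈ Set.Ioc (-Real.pi) Real.pi := by
    rw [hzw]; exact arg_add_arg_mem hwre hμ0
  rw [factor, mul_cpow_arg hz0 hw0 harg]

end

-- ### power of two bookkeeping
lemma two_pow_split (α₁ α₂ α₃ : ℝ) :
    (2:ℂ) ^ (((1 - (α₁+α₂+α₃) : ℝ)) : ℂ) =
      2 * (((1/2 : ℝ) : ℂ)) ^ (α₁:ℂ) * (((1/2 : ℝ) : ℂ)) ^ (α₂:ℂ) *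
        (((1/2 : ℝ) : ℂ)) ^ (α₃:ℂ) := by
  have h2 : (2:ℂ) ≠ 0 := two_ne_zero
  have hh : ((1/2 : ℝ) : ℂ) = (2:ℂ)⁻¹ := by norm_num
  have harg2 : Complex.arg 2 ≠ Real.pi := by
    have : Complex.arg 2 = 0 := by
      rw [show (2:ℂ) = ((2:ℝ):ℂ) by norm_num]
      exact Complex.arg_ofReal_of_nonneg (by norm_num)
    rw [this]
    exact fun h => Real.pi_ne_zero h.symm
  have hcast : (((1 - (α₁+α₂+α₃) : ℝ)) : ℂ) = 1 + (-(α₁:ℂ)) + (-(α₂:ℂ)) + (-(α₃:ℂ)) := by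
    push_cast; ring
  rw [hh, Complex.inv_cpow _ _ harg2, Complex.inv_cpow _ _ harg2, Complex.inv_cpow _ _ harg2,
    ← Complex.cpow_neg, ← Complex.cpow_neg, ← Complex.cpow_neg, hcast,
    Complex.cpow_add _ _ h2, Complex.cpow_add _ _ h2, Complex.cpow_add _ _ h2,
    Complex.cpow_one]

-- ### measure-zero part
noncomputable def lfun (v : Fin 2 → ℝ) : (Fin 2 → ℝ) →ₗ[ℝ] ℝ where
  toFun ω := ∑ i, ω i * v i
  map_add' a b := by simp [add_mul, Finset.sum_add_distrib]
  map_smul' r a := by simp [Finset.mul_sum]; ring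

lemma lfun_apply (v ω : Fin 2 → ℝ) : lfun v ω = ∑ i, ω i * v i := rfl

lemma lfun_ne_zero {v : Fin 2 → ℝ} (hv : v ≠ 0) : lfun v ≠ 0 := by
  obtain ⟨i, hi⟩ : ∃ i, v i ≠ 0 := by
    by_contra h
    push_neg at h
    exact hv (funext h)
  intro h
  apply hi
  have := LinearMap.congr_fun h (Pi.single i 1)
  rw [lfun_apply] at this
  simpa [Pi.single_apply] using this

lemma null_level {v : Fin 2 → ℝ} (hv : v ≠ 0) (c : ℝ) :
    volume {ω : Fin 2 → ℝ | ∑ i, ω i * v i = c} = 0 := by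
  obtain ⟨i, hi⟩ : ∃ i, v i ≠ 0 := by
    by_contra h
    push_neg at h
    exact hv (funext h)
  set x₀ : Fin 2 → ℝ := (-c / v i) • (Pi.single i (1:ℝ) : Fin 2 → ℝ) with hx₀
  have hfx₀ : lfun v x₀ = -c := by
    rw [lfun_apply, hx₀]
    simp only [Pi.smul_apply, smul_eq_mul, Pi.single_apply]
    rw [Finset.sum_eq_single i (fun b _ hb => by simp [hb]) (by simp)]
    simp [div_mul_cancel₀ _ hi]
  have hset : {ω : Fin 2 → ℝ | ∑ i, ω i * v i = c} =
      (fun y => y + x₀) ⁻¹' (LinearMap.ker (lfun v) : Set (Fin 2 → ℝ)) := by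
    ext y
    simp only [Set.mem_setOf_eq, Set.mem_preimage, SetLike.mem_coe, LinearMap.mem_ker,
      map_add, hfx₀, ← lfun_apply]
    constructor <;> intro h <;> linarith
  rw [hset, measure_preimage_add_right]
  exact Measure.addHaar_submodule volume _
    (fun h => lfun_ne_zero hv (LinearMap.ker_eq_top.mp h))

lemma ae_good {v : Fin 2 → ℝ} (hv : v ≠ 0) :
    ∀ᵐ ω : Fin 2 → ℝ ∂volume, ∀ k : ℤ, (∑ i, ω i * v i) ≠ k * Real.pi := by
  rw [MeasureTheory.ae_all_iff]
  intro k
  rw [Filter.eventually_iff, MeasureTheory.mem_ae_iff]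
  rw [show {ω : Fin 2 → ℝ | (∑ i, ω i * v i) ≠ (k:ℝ) * Real.pi}ᶜ =
    {ω : Fin 2 → ℝ | ∑ i, ω i * v i = (k:ℝ) * Real.pi} by ext ω; simp]
  exact null_level hv _

lemma good_of {u : ℝ} (H : ∀ k : ℤ, u ≠ k * Real.pi) :
    u ≠ 0 ∧ Real.sin (u/2) ≠ 0 ∧ Real.cos (u/2) ≠ 0 := by
  refine ⟨fun h => H 0 (by simp [h]), fun h => ?_, fun h => ?_⟩
  · obtain ⟨n, hn⟩ := Real.sin_eq_zero_iff.mp h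
    exact H (2*n) (by push_cast; linarith)
  · obtain ⟨n, hn⟩ := Real.cos_eq_zero_iff.mp h
    exact H (2*n+1) (by push_cast; linarith)

lemma filtM_ne {u : ℝ} (hc : Real.cos (u/2) ≠ 0) :
    (1 + Complex.exp (-Complex.I * u)) ≠ 0 := by
  intro h
  have he := filtM_eq (u := u)
  rw [h] at he
  have hZ : (0:ℝ) = Real.cos (u/2) * Real.cos (u/2) := by
    have := congrArg Complex.re he
    rw [re_auxM] at this
    simpa using this
  exact (mul_self_pos.mpr hc).ne hZ

lemma filtP_ne {u : ℝ} (hc : Real.cos (u/2) ≠ 0) :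
    (1 + Complex.exp (Complex.I * u)) ≠ 0 := by
  intro h
  have he := filtP_eq (u := u)
  rw [h] at he
  have hZ : (0:ℝ) = Real.cos (u/2) * Real.cos (u/2) := by
    have := congrArg Complex.re he
    rw [re_auxP] at this
    simpa using this
  exact (mul_self_pos.mpr hc).ne hZ


/-- the two-scale (refinement) relation in the Fourier domain:
`2 B̂_α(2ω) = 2^{1−|α|}(1+e^{−i⟨ω,x¹⟩})^{α₁}(1+e^{−i⟨ω,x²⟩})^{α₂}(1+e^{i⟨ω,x³⟩})^{α₃} B̂_α(ω)`
for almost every `ω ∈ ℝ²`. -/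
theorem fracHex_refinement_filter
    (x1 x2 : Fin 2 → ℝ) (hindep : LinearIndependent ℝ ![x1, x2])
    (hsum : x1 + x2 = ![1, 0])
    (α₁ α₂ α₃ : ℝ) (hα1 : 0 < α₁) (hα2 : 0 < α₂) (hα3 : 0 < α₃) :
    ∀ᵐ ω : Fin 2 → ℝ ∂volume,
      2 * fracHexFT x1 x2 α₁ α₂ α₃ (fun i => 2 * ω i) =
        (2 : ℂ) ^ (((1 - (α₁ + α₂ + α₃) : ℝ) : ℂ)) *
          (1 + Complex.exp (-Complex.I * ((∑ i, ω i * x1 i : ℝ) : ℂ))) ^ (α₁ : ℂ) *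
          (1 + Complex.exp (-Complex.I * ((∑ i, ω i * x2 i : ℝ) : ℂ))) ^ (α₂ : ℂ) *
          (1 + Complex.exp (Complex.I * ((∑ i, ω i * (x1 i + x2 i) : ℝ) : ℂ))) ^ (α₃ : ℂ) *
          fracHexFT x1 x2 α₁ α₂ α₃ ω := by
  have hx1 : x1 ≠ 0 := by
    have := hindep.ne_zero 0
    simpa using this
  have hx2 : x2 ≠ 0 := by
    have := hindep.ne_zero 1
    simpa using this
  have hx3 : (fun i => x1 i + x2 i) ≠ 0 := by
    intro h
    have h0 := congrFun h 0
    have h1 := congrFun hsum 0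
    simp [Pi.add_apply] at h0 h1
    rw [h0] at h1
    exact zero_ne_one h1
  filter_upwards [ae_good hx1, ae_good hx2, ae_good hx3] with ω H1 H2 H3
  obtain ⟨hu1, hs1, hc1⟩ := good_of H1
  obtain ⟨hu2, hs2, hc2⟩ := good_of H2
  obtain ⟨hu3, hs3, hc3⟩ := good_of H3
  have e1 : (∑ i, (2 * ω i) * x1 i) = 2 * ∑ i, ω i * x1 i := by
    rw [Finset.mul_sum]; exact Finset.sum_congr rfl fun i _ => by ring
  have e2 : (∑ i, (2 * ω i) * x2 i) = 2 * ∑ i, ω i * x2 i := by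
    rw [Finset.mul_sum]; exact Finset.sum_congr rfl fun i _ => by ring
  have e3 : (∑ i, (2 * ω i) * (x1 i + x2 i)) = 2 * ∑ i, ω i * (x1 i + x2 i) := by
    rw [Finset.mul_sum]; exact Finset.sum_congr rfl fun i _ => by ring
  simp only [fracHexFT, e1, e2, e3]
  rw [phiM_refine hu1 hs1 hc1 α₁, phiM_refine hu2 hs2 hc2 α₂, phiP_refine hu3 hs3 hc3 α₃]
  have half : ∀ z : ℂ, z / 2 = z * (((1/2 : ℝ)) : ℂ) := fun z => by push_cast; ring
  rw [half, half, half,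
    cpow_mul_ofReal_pos (filtM_ne hc1) (by norm_num : (0:ℝ) < 1/2) (α₁ : ℂ),
    cpow_mul_ofReal_pos (filtM_ne hc2) (by norm_num : (0:ℝ) < 1/2) (α₂ : ℂ),
    cpow_mul_ofReal_pos (filtP_ne hc3) (by norm_num : (0:ℝ) < 1/2) (α₃ : ℂ),
    two_pow_split α₁ α₂ α₃]
  ring
end
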